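/- arXiv:1107.2676 — 5 statements merged into one kernel-verified Lean document; each statement's English description precedes it below -/
import Mathlib

section
/- Let R be a regular ring of prime characteristic p that is F-finite and such that the Frobenius makes R a flat (hence faithfully flat) R-module, and let (J_i)_{i∈S} be a family of ideals of R. Then (⋂_i J_i)^{[p^e]} = ⋂_i J_i^{[p^e]}. Consequently, for any ideal b of R there is a unique smallest ideal J with b ⊆ J^{[p^e]}. -/
/-- The Frobenius power `I^{[p^e]}` of an ideal: the ideal generated by the
`p^e`-th powers of the elements of `I`. -/
def frobeniusPower {R : Type*} [CommRing R] (p e : ℕ) (I : Ideal R) : Ideal R :=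
  Ideal.span ((fun x : R => x ^ p ^ e) '' (I : Set R))

lemma mem_smul_top_pi {R : Type*} [CommRing R] {n : ℕ} (I : Ideal R) (x : Fin n → R) :
    x ∈ I • (⊤ : Submodule R (Fin n → R)) ↔ ∀ j, x j ∈ I := by
  constructor
  · intro hx j
    refine Submodule.smul_induction_on (p := fun y => y j ∈ I) hx
      (fun r hr m _ => ?_) (fun a b ha hb => I.add_mem ha hb)
    simpa using I.mul_mem_right (m j) hr
  · intro h
    rw [pi_eq_sum_univ x]
    exact Submodule.sum_mem _ fun j _ => Submodule.smul_mem_smul (h j) Submodule.mem_top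

lemma iInf_smul_top {R M : Type*} {ι : Type*} [CommRing R] [AddCommGroup M] [Module R M]
    [Module.Finite R M] [Module.Projective R M] (I : ι → Ideal R) :
    (⨅ i, I i) • (⊤ : Submodule R M) = ⨅ i, I i • (⊤ : Submodule R M) := by
  obtain ⟨n, f, g, hf, hg, hfg⟩ := Module.Finite.exists_comp_eq_id_of_projective R M
  refine le_antisymm (le_iInf fun i => Submodule.smul_mono_left (iInf_le _ i)) ?_
  intro x hx
  have hgx : ∀ i, g x ∈ I i • (⊤ : Submodule R (Fin n → R)) := by
    intro i
    have hxi : x ∈ I i • (⊤ : Submodule R M) := (Submodule.mem_iInf _).mp hx i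
    have h1 : g x ∈ Submodule.map g (I i • (⊤ : Submodule R M)) :=
      Submodule.mem_map_of_mem hxi
    rw [Submodule.map_smul''] at h1
    exact Submodule.smul_mono le_rfl le_top h1
  have hgx' : g x ∈ (⨅ i, I i) • (⊤ : Submodule R (Fin n → R)) :=
    (mem_smul_top_pi _ _).mpr fun j =>
      (Submodule.mem_iInf _).mpr fun i => (mem_smul_top_pi _ _).mp (hgx i) j
  have h2 : f (g x) ∈ Submodule.map f ((⨅ i, I i) • (⊤ : Submodule R (Fin n → R))) :=
    Submodule.mem_map_of_mem hgx'
  rw [Submodule.map_smul''] at h2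
  have hx' : f (g x) = x := DFunLike.congr_fun hfg x
  rw [hx'] at h2
  exact Submodule.smul_mono le_rfl le_top h2

lemma map_iInf_of_flat_of_finite {R S : Type*} {ι : Type*} [CommRing R] [CommRing S]
    [IsNoetherianRing R] (φ : R →+* S) (hflat : φ.Flat) (hfin : φ.Finite) (I : ι → Ideal R) :
    Ideal.map φ (⨅ i, I i) = ⨅ i, Ideal.map φ (I i) := by
  algebraize [φ]
  haveI : Module.FinitePresentation R S := Module.finitePresentation_of_finite R S
  haveI : Module.Projective R S :=
    Module.freeLocus_eq_univ_iff.mp (Module.freeLocus_eq_univ (R := R) (M := S))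
  have h := iInf_smul_top (M := S) I
  simp_rw [Ideal.smul_top_eq_map] at h
  ext x
  have hx := SetLike.ext_iff.mp h x
  simp only [Submodule.restrictScalars_mem, Submodule.mem_iInf] at hx
  rw [Ideal.mem_iInf]
  exact hx

lemma frobeniusPower_eq_map {R : Type*} [CommRing R] (p e : ℕ) [ExpChar R p] (I : Ideal R) :
    frobeniusPower p e I = Ideal.map (iterateFrobenius R p e) I := by
  rfl

lemma iterateFrobenius_flat {R : Type*} [CommRing R] (p e : ℕ) [ExpChar R p]
    (hflat : (frobenius R p).Flat) : (iterateFrobenius R p e).Flat := by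
  induction e with
  | zero => rw [iterateFrobenius_zero]; exact RingHom.Flat.id R
  | succ n ih =>
    have : iterateFrobenius R p (n + 1) = (iterateFrobenius R p n).comp (frobenius R p) := by
      rw [← iterateFrobenius_one (R := R) (p := p), ← iterateFrobenius_add]
    rw [this]
    exact RingHom.Flat.comp hflat ih

lemma iterateFrobenius_finite {R : Type*} [CommRing R] (p e : ℕ) [ExpChar R p]
    (hfin : (frobenius R p).Finite) : (iterateFrobenius R p e).Finite := by
  induction e with
  | zero => rw [iterateFrobenius_zero]; exact RingHom.Finite.id R
  | succ n ih =>
    have : iterateFrobenius R p (n + 1) = (iterateFrobenius R p n).comp (frobenius R p) := by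
      rw [← iterateFrobenius_one (R := R) (p := p), ← iterateFrobenius_add]
    rw [this]
    exact ih.comp hfin

lemma frobeniusPower_iInf_aux {R : Type*} [CommRing R]
    (p : ℕ) [ExpChar R p] [IsNoetherianRing R] (hflat : (frobenius R p).Flat)
    (hFfin : (frobenius R p).Finite) (e : ℕ) {ι : Type*} (J : ι → Ideal R) :
    frobeniusPower p e (⨅ i, J i) = ⨅ i, frobeniusPower p e (J i) := by
  simp_rw [frobeniusPower_eq_map]
  exact map_iInf_of_flat_of_finite _ (iterateFrobenius_flat p e hflat)
    (iterateFrobenius_finite p e hFfin) J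

/-- If `R` is a Noetherian (e.g. regular) ring of prime characteristic `p`, `F`-finite and
with flat Frobenius, then Frobenius powers commute with arbitrary intersections of ideals:
`(⋂ᵢ Jᵢ)^{[p^e]} = ⋂ᵢ Jᵢ^{[p^e]}`. Consequently, for every ideal `b` there is a unique
smallest ideal `J` with `b ⊆ J^{[p^e]}` (denoted `b^{[1/p^e]}`). -/
theorem frobeniusPower_iInf_and_exists_smallest_root {R : Type*} [CommRing R]
    (p : ℕ) [Fact p.Prime] [CharP R p] [ExpChar R p]
    [IsNoetherianRing R] (hFlat : (frobenius R p).Flat)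
    (hFfin : (frobenius R p).Finite) (e : ℕ) :
    (∀ {ι : Type} (J : ι → Ideal R),
        frobeniusPower p e (⨅ i, J i) = ⨅ i, frobeniusPower p e (J i)) ∧
      ∀ b : Ideal R, ∃! J : Ideal R,
        b ≤ frobeniusPower p e J ∧
          ∀ J' : Ideal R, b ≤ frobeniusPower p e J' → J ≤ J' := by
  refine ⟨fun J => frobeniusPower_iInf_aux p hFlat hFfin e J, fun b => ?_⟩
  refine ⟨⨅ i : {J' : Ideal R // b ≤ frobeniusPower p e J'}, (i : Ideal R), ⟨⟨?_, ?_⟩, ?_⟩⟩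
  · rw [frobeniusPower_iInf_aux p hFlat hFfin e (fun i : {J' : Ideal R // b ≤ frobeniusPower p e J'} => (i : Ideal R))]
    exact le_iInf fun i => i.2
  · intro J' hJ'
    exact iInf_le _ (⟨J', hJ'⟩ : {J'' : Ideal R // b ≤ frobeniusPower p e J''})
  · rintro J ⟨hJ1, hJ2⟩
    exact le_antisymm (le_iInf fun i => hJ2 _ i.2) (iInf_le _ (⟨J, hJ1⟩ : {J'' : Ideal R // b ≤ frobeniusPower p e J''}))
end

section
/- Let R be a ring of prime characteristic p such that Frobenius is flat, let a ⊆ m be ideals with m = m_P maximal, and define ν(e) to be the largest i with a^i ⊄ m^{[p^e]}. Then ν(e+1) ≥ p·ν(e) for all e ≥ 1. -/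
/-- For a flat algebra `S` over `R` such that proper ideals of `R` extend to proper
ideals of `S`, extension-contraction of ideals is trivial. -/
theorem flat_comap_map_le {R S : Type u} [CommRing R] [CommRing S] [Algebra R S]
    [Module.Flat R S]
    (hm : ∀ J : Ideal R, J ≠ ⊤ → Ideal.map (algebraMap R S) J ≠ ⊤)
    (I : Ideal R) (x : R) (hx : algebraMap R S x ∈ I.map (algebraMap R S)) : x ∈ I := by
  by_contra hxI
  set J := I.colon (Ideal.span {x}) with hJdef
  have hJ : J ≠ ⊤ := by
    intro h
    have h1 : (1 : R) ∈ J := h ▸ Submodule.mem_top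
    rw [hJdef, Ideal.mem_colon_span_singleton, one_mul] at h1
    exact hxI h1
  apply hm J hJ
  rw [Ideal.eq_top_iff_one]
  -- get a representation of `algebraMap x` as a combination of images of elements of `I`
  rw [Ideal.map, Ideal.span, ← Submodule.span_eq (Submodule.span S _), Submodule.span_eq] at hx
  obtain ⟨n, c, b, hsum⟩ := Submodule.mem_span_set'.mp hx
  choose a ha hab using fun i => (b i).2
  -- set up the relation Σ f i • vec i = 0 in the `R`-module `S`
  set f : ULift.{u} (Fin (n + 1)) → R := fun i => Fin.cases x a i.down with hf
  set vec : ULift.{u} (Fin (n + 1)) → S := fun i => Fin.cases 1 (fun j => -(c j)) i.down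
    with hvec
  have hrel : ∑ i, f i • vec i = 0 := by
    have hconv : ∑ i : ULift.{u} (Fin (n + 1)), f i • vec i
        = ∑ i : Fin (n + 1), f ⟨i⟩ • vec ⟨i⟩ :=
      Fintype.sum_equiv Equiv.ulift _ _ (fun _ => rfl)
    rw [hconv, Fin.sum_univ_succ]
    simp only [hf, hvec, Fin.cases_zero, Fin.cases_succ]
    have : ∀ i : Fin n, a i • (-(c i)) = -(c i • (b i : S)) := by
      intro i
      rw [Algebra.smul_def, hab, smul_eq_mul]
      ring
    rw [Finset.sum_congr rfl fun i _ => this i, Finset.sum_neg_distrib, hsum,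
      Algebra.smul_def, mul_one]
    ring
  obtain ⟨κ, A, y, hy, hA⟩ :=
    Module.Flat.isTrivialRelation_of_sum_smul_eq_zero (R := R) (M := S) (f := f) (x := vec) hrel
  -- the coefficients `A 0 j` lie in `J`
  have hAJ : ∀ j, A ⟨0⟩ j ∈ J := by
    intro j
    rw [hJdef, Ideal.mem_colon_span_singleton, mul_comm]
    have h0 := hA j
    have hconv : ∑ i : ULift.{u} (Fin (n + 1)), f i * A i j
        = ∑ i : Fin (n + 1), f ⟨i⟩ * A ⟨i⟩ j :=
      Fintype.sum_equiv Equiv.ulift _ _ (fun _ => rfl)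
    rw [hconv, Fin.sum_univ_succ] at h0
    simp only [hf, Fin.cases_zero, Fin.cases_succ] at h0
    have hx0 : x * A ⟨0⟩ j = -∑ i : Fin n, a i * A ⟨(i : Fin n).succ⟩ j := by
      linear_combination h0
    rw [hx0]
    exact neg_mem (Ideal.sum_mem _ fun i _ => Ideal.mul_mem_right _ _ (ha i))
  -- conclude `1 ∈ map (algebraMap R S) J`
  have h1 : (1 : S) = ∑ j, A ⟨0⟩ j • y j := by simpa [hvec] using hy ⟨0⟩
  rw [h1]
  refine Ideal.sum_mem _ fun j _ => ?_
  rw [Algebra.smul_def]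
  exact Ideal.mul_mem_right _ _ (Ideal.mem_map_of_mem _ (hAJ j))

/-- Let `R` have prime characteristic `p` with flat Frobenius, `a ⊆ m` ideals with `m`
maximal, and `ν e` the largest `i` with `aⁱ ⊄ m^{[pᵉ]}`. Then `ν (e+1) ≥ p · ν e` for
all `e ≥ 1`. -/
theorem nu_succ_ge_p_mul_nu {R : Type*} [CommRing R] (p : ℕ) [Fact p.Prime]
    [CharP R p] [ExpChar R p] (hflat : (frobenius R p).Flat)
    (a m : Ideal R) (ham : a ≤ m) (hmax : m.IsMaximal) (ν : ℕ → ℕ)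
    (hν : ∀ e, 1 ≤ e → IsGreatest {i : ℕ | ¬ a ^ i ≤ frobeniusPower p e m} (ν e)) :
    ∀ e, 1 ≤ e → p * ν e ≤ ν (e + 1) := by
  intro e he
  -- set up the Frobenius algebra structure
  letI alg : Algebra R R := (frobenius R p).toAlgebra
  haveI hfl : @Module.Flat R R _ _ alg.toModule := hflat
  have halg : algebraMap R R = frobenius R p := rfl
  -- proper ideals extend to proper ideals under Frobenius
  have hm : ∀ J : Ideal R, J ≠ ⊤ → Ideal.map (algebraMap R R) J ≠ ⊤ := by
    intro J hJ htop
    obtain ⟨M, hM, hJM⟩ := J.exists_le_maximal hJ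
    have : Ideal.map (algebraMap R R) J ≤ M := by
      rw [Ideal.map_le_iff_le_comap]
      intro y hy
      show frobenius R p y ∈ M
      rw [frobenius_def]
      exact Ideal.pow_mem_of_mem M (hJM hy) p (Fact.out : p.Prime).pos
    rw [htop] at this
    exact hM.ne_top (top_le_iff.mp this)
  -- the successor Frobenius power is the Frobenius extension of the previous one
  have hFP : frobeniusPower p (e + 1) m
      = Ideal.map (algebraMap R R) (frobeniusPower p e m) := by
    rw [frobeniusPower, frobeniusPower, Ideal.map_span, ← Set.image_comp]
    congr 1
    ext z
    constructor
    · rintro ⟨w, hw, rfl⟩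
      exact ⟨w, hw, by simp [halg, frobenius_def, ← pow_mul, pow_succ]⟩
    · rintro ⟨w, hw, rfl⟩
      exact ⟨w, hw, by simp [halg, frobenius_def, ← pow_mul, pow_succ]⟩
  -- pick a witness h ∈ a^(ν e) \ m^{[p^e]}
  obtain ⟨hnu, -⟩ := hν e he
  obtain ⟨h, hha, hhm⟩ := SetLike.not_le_iff_exists.mp hnu
  -- h^p witnesses that p * ν e is in the set for e + 1
  refine (hν (e + 1) (by omega)).2 ?_
  show ¬ a ^ (p * ν e) ≤ frobeniusPower p (e + 1) m
  intro hle
  have hmem : h ^ p ∈ a ^ (p * ν e) := by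
    have := Ideal.pow_mem_pow hha p
    rwa [← pow_mul, mul_comm] at this
  have : h ^ p ∈ Ideal.map (algebraMap R R) (frobeniusPower p e m) := by
    rw [← hFP]; exact hle hmem
  have : algebraMap R R h ∈ Ideal.map (algebraMap R R) (frobeniusPower p e m) := by
    rwa [halg, frobenius_def]
  exact hhm (flat_comap_map_le hm _ h this)
end

section
/- Let a, b ⊆ m be nonzero ideals of a ring of prime characteristic p with flat Frobenius, m maximal. If a^r ⊆ m^{[p^e]} and b^s ⊆ m^{[p^e]}, then (a+b)^{r+s} ⊆ m^{[p^e]}. Consequently ν_{a+b}(e) ≤ ν_a(e) + ν_b(e) + 1 for every e ≥ 1, and hence fpt_P(a+b) ≤ fpt_P(a) + fpt_P(b). -/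
open Filter

/-- If `a, b ⊆ m` with `m` maximal, `a^r ⊆ m^{[pᵉ]}` and `b^s ⊆ m^{[pᵉ]}` imply
`(a+b)^{r+s} ⊆ m^{[pᵉ]}`; consequently `ν_{a+b}(e) ≤ ν_a(e) + ν_b(e) + 1` for every
`e ≥ 1`, and hence `fpt(a+b) ≤ fpt(a) + fpt(b)`. -/
theorem fpt_sum_le_add_fpt {R : Type*} [CommRing R] (p : ℕ) [Fact p.Prime]
    [CharP R p] [ExpChar R p] (_ : (frobenius R p).Flat)
    (a b m : Ideal R) (ham : a ≤ m) (hbm : b ≤ m) (hmax : m.IsMaximal)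
    (ha : a ≠ ⊥) (hb : b ≠ ⊥) (νa νb νab : ℕ → ℕ)
    (hνa : ∀ e, 1 ≤ e → IsGreatest {i : ℕ | ¬ a ^ i ≤ frobeniusPower p e m} (νa e))
    (hνb : ∀ e, 1 ≤ e → IsGreatest {i : ℕ | ¬ b ^ i ≤ frobeniusPower p e m} (νb e))
    (hνab : ∀ e, 1 ≤ e →
      IsGreatest {i : ℕ | ¬ (a ⊔ b) ^ i ≤ frobeniusPower p e m} (νab e))
    (fptA fptB fptAB : ℝ)
    (hA : Tendsto (fun e : ℕ => (νa e : ℝ) / (p : ℝ) ^ e) atTop (nhds fptA))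
    (hB : Tendsto (fun e : ℕ => (νb e : ℝ) / (p : ℝ) ^ e) atTop (nhds fptB))
    (hAB : Tendsto (fun e : ℕ => (νab e : ℝ) / (p : ℝ) ^ e) atTop (nhds fptAB)) :
    (∀ e r s : ℕ, a ^ r ≤ frobeniusPower p e m → b ^ s ≤ frobeniusPower p e m →
        (a ⊔ b) ^ (r + s) ≤ frobeniusPower p e m) ∧
      (∀ e, 1 ≤ e → νab e ≤ νa e + νb e + 1) ∧ fptAB ≤ fptA + fptB := by
  have hp1 : (1 : ℝ) < p := by
    exact_mod_cast (Fact.out : p.Prime).one_lt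
  have key : ∀ e r s : ℕ, a ^ r ≤ frobeniusPower p e m → b ^ s ≤ frobeniusPower p e m →
      (a ⊔ b) ^ (r + s) ≤ frobeniusPower p e m := by
    intro e r s har hbs
    exact Ideal.sup_pow_add_le_pow_sup_pow.trans (sup_le har hbs)
  have hν : ∀ e, 1 ≤ e → νab e ≤ νa e + νb e + 1 := by
    intro e he
    by_contra h
    push_neg at h
    have har : a ^ (νa e + 1) ≤ frobeniusPower p e m := by
      by_contra hc
      exact absurd ((hνa e he).2 hc) (by omega)
    have hbs : b ^ (νb e + 1) ≤ frobeniusPower p e m := by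
      by_contra hc
      exact absurd ((hνb e he).2 hc) (by omega)
    have h1 := key e _ _ har hbs
    have h2 : (a ⊔ b) ^ (νab e) ≤ (a ⊔ b) ^ (νa e + 1 + (νb e + 1)) :=
      Ideal.pow_le_pow_right (by omega)
    exact (hνab e he).1 (h2.trans h1)
  refine ⟨key, hν, ?_⟩
  have h0 : Tendsto (fun e : ℕ => (1 : ℝ) / (p : ℝ) ^ e) atTop (nhds 0) := by
    simpa [one_div, inv_pow] using
      tendsto_pow_atTop_nhds_zero_of_lt_one (r := ((p : ℝ))⁻¹)
        (by positivity) (inv_lt_one_of_one_lt₀ hp1)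
  have hsum : Tendsto (fun e : ℕ => (νa e : ℝ) / (p : ℝ) ^ e + (νb e : ℝ) / (p : ℝ) ^ e
      + (1 : ℝ) / (p : ℝ) ^ e) atTop (nhds (fptA + fptB + 0)) := (hA.add hB).add h0
  have hle : fptAB ≤ fptA + fptB + 0 := by
    refine le_of_tendsto_of_tendsto hAB hsum ?_
    filter_upwards [eventually_ge_atTop 1] with e he
    have hpe : (0 : ℝ) < (p : ℝ) ^ e := by positivity
    rw [← add_div, ← add_div, div_le_div_iff_of_pos_right hpe]
    exact_mod_cast hν e he
  linarith
end

section
/- Let f = x² + y³ in k[x,y] with char(k) = p > 3. The largest r ≤ p−1 such that f^r ∉ (x^p, y^p) is ν(1) = ⌊(p−1)/2⌋ + ⌊(p−1)/3⌋; explicitly, ν(1) = (5/6)(p−1) if p ≡ 1 (mod 3), and ν(1) = (5p−7)/6 if p ≡ 2 (mod 3). -/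
open MvPolynomial Finset

/-- For `f = x² + y³` over a field of characteristic `p > 3`, the largest `r` with
`f^r ∉ (x^p, y^p)` is `ν(1) = ⌊(p−1)/2⌋ + ⌊(p−1)/3⌋`; explicitly `ν(1) = (5/6)(p−1)`
if `p ≡ 1 (mod 3)` and `ν(1) = (5p−7)/6` if `p ≡ 2 (mod 3)`. -/
theorem nu_one_of_cusp (k : Type*) [Field k] (p : ℕ) [Fact p.Prime] [CharP k p]
    (hp : 3 < p) (f : MvPolynomial (Fin 2) k)
    (hf : f = X 0 ^ 2 + X 1 ^ 3) :
    IsGreatest {r : ℕ | f ^ r ∉ Ideal.span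
        {(X 0 : MvPolynomial (Fin 2) k) ^ p, (X 1 : MvPolynomial (Fin 2) k) ^ p}}
      ((p - 1) / 2 + (p - 1) / 3) ∧
      (p % 3 = 1 → 6 * ((p - 1) / 2 + (p - 1) / 3) = 5 * (p - 1)) ∧
      (p % 3 = 2 → 6 * ((p - 1) / 2 + (p - 1) / 3) = 5 * p - 7) := by
  subst hf
  have hpp : p.Prime := Fact.out
  have hp2 : p % 2 = 1 := Nat.odd_iff.mp (hpp.odd_of_ne_two (by omega))
  set i := (p - 1) / 2 with hi
  set j := (p - 1) / 3 with hj
  have key : ∀ r : ℕ, (X 0 ^ 2 + X 1 ^ 3 : MvPolynomial (Fin 2) k) ^ r =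
      ∑ t ∈ range (r + 1),
        monomial (Finsupp.single 0 (2 * t) + Finsupp.single 1 (3 * (r - t)))
          ((r.choose t : k)) := by
    intro r
    rw [add_pow]
    refine Finset.sum_congr rfl fun t ht => ?_
    rw [← pow_mul, ← pow_mul, X_pow_eq_monomial, X_pow_eq_monomial, monomial_mul, mul_one,
      ← map_natCast (C : k →+* MvPolynomial (Fin 2) k), mul_comm, C_mul_monomial, mul_one]
  refine ⟨⟨?_, ?_⟩, by omega, by omega⟩
  · -- ν ∈ set
    intro hmem
    set m0 : Fin 2 →₀ ℕ := Finsupp.single 0 (2 * i) + Finsupp.single 1 (3 * j) with hm0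
    have hc : coeff m0 ((X 0 ^ 2 + X 1 ^ 3 : MvPolynomial (Fin 2) k) ^ (i + j))
        = ((i + j).choose i : k) := by
      rw [key, coeff_sum, Finset.sum_eq_single i]
      · rw [coeff_monomial, if_pos]
        simp [hm0]
      · intro t ht hne
        rw [coeff_monomial, if_neg]
        intro heq
        apply hne
        have h0 := DFunLike.congr_fun heq 0
        simp [hm0, Finsupp.single_apply] at h0
        omega
      · intro h
        simp at h
    rw [Ideal.mem_span_pair] at hmem
    obtain ⟨u, v, huv⟩ := hmem
    have h2i : 2 * i < p := by omega
    have h3j : 3 * j < p := by omega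
    have hzero : coeff m0 (u * X 0 ^ p + v * X 1 ^ p) = 0 := by
      rw [coeff_add, X_pow_eq_monomial, X_pow_eq_monomial, coeff_mul_monomial',
        coeff_mul_monomial', if_neg, if_neg, add_zero]
      · rw [Finsupp.single_le_iff]
        simp [hm0, Finsupp.single_apply]
        omega
      · rw [Finsupp.single_le_iff]
        simp [hm0, Finsupp.single_apply]
        omega
    rw [huv, hc] at hzero
    have hnd : ¬ p ∣ (i + j).choose i := by
      intro hd
      have h1 := Nat.choose_mul_factorial_mul_factorial (Nat.le_add_right i j)
      have h2 : p ∣ (i + j).factorial := by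
        rw [← h1]
        exact (hd.mul_right _).mul_right _
      have := (Nat.Prime.dvd_factorial hpp).mp h2
      omega
    exact hnd ((CharP.cast_eq_zero_iff k p _).mp hzero)
  · -- upper bound
    intro r hr
    by_contra h
    push_neg at h
    apply hr
    rw [key]
    apply Ideal.sum_mem
    intro t ht
    rw [Finset.mem_range] at ht
    have hij : (p - 1) / 2 + (p - 1) / 3 < r := h
    rcases (by omega : p ≤ 2 * t ∨ p ≤ 3 * (r - t)) with hle | hle
    · have heq : (monomial (Finsupp.single 0 (2 * t) + Finsupp.single 1 (3 * (r - t)))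
          ((r.choose t : k)) : MvPolynomial (Fin 2) k)
          = X 0 ^ p * monomial (Finsupp.single 0 (2 * t - p) + Finsupp.single 1 (3 * (r - t)))
            ((r.choose t : k)) := by
        rw [X_pow_eq_monomial, monomial_mul, one_mul, ← add_assoc, ← Finsupp.single_add,
          Nat.add_sub_cancel' hle]
      rw [heq]
      exact Ideal.mul_mem_right _ _ (Ideal.subset_span (by simp))
    · have heq : (monomial (Finsupp.single 0 (2 * t) + Finsupp.single 1 (3 * (r - t)))
          ((r.choose t : k)) : MvPolynomial (Fin 2) k)
          = X 1 ^ p * monomial (Finsupp.single 0 (2 * t) + Finsupp.single 1 (3 * (r - t) - p))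
            ((r.choose t : k)) := by
        rw [X_pow_eq_monomial, monomial_mul, one_mul]
        have hs : (Finsupp.single (1 : Fin 2) p +
            (Finsupp.single 0 (2 * t) + Finsupp.single 1 (3 * (r - t) - p)))
            = (Finsupp.single (0 : Fin 2) (2 * t) + Finsupp.single 1 (3 * (r - t))) := by
          ext a
          fin_cases a <;> simp [Finsupp.single_apply] <;> omega
        rw [hs]
      rw [heq]
      exact Ideal.mul_mem_right _ _ (Ideal.subset_span (by simp))
end

section
/- Let k be a perfect field of characteristic p and b ⊆ k[x₁,…,xₙ] an ideal generated in degrees ≤ d. Then b^{[1/p^e]} is generated in degrees ≤ d/p^e. More precisely, if the monomials w₁,…,w_N of degree ≤ p^e − 1 in each variable form a basis of R = k[x₁,…,xₙ] over R^{p^e} = k[x₁^{p^e},…,xₙ^{p^e}], and if b = (h₁,…,h_m) with h_i = Σ_j u_{i,j}^{p^e} w_j, then b^{[1/p^e]} = (u_{i,j} : i ≤ m, j ≤ N). -/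
open MvPolynomial

section
variable {k : Type*} [Field k] [PerfectField k] (p : ℕ) [hp : Fact p.Prime] [CharP k p] {n : ℕ} (e : ℕ)

noncomputable def rr : k ≃+* k := (iterateFrobeniusEquiv k p e).symm

lemma rr_pow (a : k) : (rr p e a : k) ^ p ^ e = a := by
  have := (iterateFrobeniusEquiv k p e).apply_symm_apply a
  rwa [iterateFrobeniusEquiv_def] at this

lemma pow_rr (a : k) : rr p e (a ^ p ^ e) = a := by
  have := (iterateFrobeniusEquiv k p e).symm_apply_apply a
  rwa [iterateFrobeniusEquiv_def] at this

noncomputable def expMap (b : Fin n → Fin (p ^ e)) (t : Fin n →₀ ℕ) : Fin n →₀ ℕ :=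
  p ^ e • t + Finsupp.equivFunOnFinite.symm (fun j => (b j : ℕ))

lemma expMap_apply (b : Fin n → Fin (p ^ e)) (t : Fin n →₀ ℕ) (j : Fin n) :
    expMap p e b t j = p ^ e * t j + (b j : ℕ) := by
  simp [expMap]

lemma qpos : 0 < p ^ e := pow_pos hp.out.pos e

noncomputable def bOf (s : Fin n →₀ ℕ) (j : Fin n) : Fin (p ^ e) := ⟨s j % p ^ e, Nat.mod_lt _ (qpos p e)⟩

noncomputable def tOf (s : Fin n →₀ ℕ) : Fin n →₀ ℕ := Finsupp.mapRange (· / p ^ e) (Nat.zero_div _) s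

lemma expMap_bOf_tOf (s : Fin n →₀ ℕ) : expMap p e (bOf p e s) (tOf p e s) = s := by
  ext j
  rw [expMap_apply]
  simp [bOf, tOf, Finsupp.mapRange_apply, Nat.div_add_mod]

lemma bOf_expMap (b : Fin n → Fin (p ^ e)) (t : Fin n →₀ ℕ) : bOf p e (expMap p e b t) = b := by
  funext j
  apply Fin.ext
  simp [bOf, expMap_apply, Nat.mul_add_mod, Nat.mod_eq_of_lt (b j).isLt]

lemma tOf_expMap (b : Fin n → Fin (p ^ e)) (t : Fin n →₀ ℕ) : tOf p e (expMap p e b t) = t := by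
  ext j
  simp [tOf, Finsupp.mapRange_apply, expMap_apply, Nat.mul_add_div (qpos p e),
    Nat.div_eq_of_lt (b j).isLt]

lemma expMap_injective (b : Fin n → Fin (p ^ e)) : Function.Injective (expMap p e b) := by
  intro t t' h
  have := congrArg (tOf p e) h
  rwa [tOf_expMap, tOf_expMap] at this

noncomputable def D (b : Fin n → Fin (p ^ e)) (f : MvPolynomial (Fin n) k) :
    MvPolynomial (Fin n) k :=
  AddMonoidAlgebra.ofCoeff (Finsupp.mapRange (rr p e) (map_zero _)
    (Finsupp.comapDomain (expMap p e b) (AddMonoidAlgebra.coeff f) ((expMap_injective p e b).injOn)))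

lemma coeff_D (b : Fin n → Fin (p ^ e)) (f : MvPolynomial (Fin n) k) (t : Fin n →₀ ℕ) :
    coeff t (D p e b f) = rr p e (coeff (expMap p e b t) f) := rfl


set_option linter.unusedSectionVars false

lemma pow_eq_sum (c : MvPolynomial (Fin n) k) :
    c ^ p ^ e = ∑ v ∈ c.support, monomial (p ^ e • v) (coeff v c ^ p ^ e) := by
  conv_lhs => rw [← support_sum_monomial_coeff c, ← iterateFrobenius_def, map_sum]
  simp [iterateFrobenius_def, monomial_pow]

lemma coeff_pow_smul (c : MvPolynomial (Fin n) k) (t : Fin n →₀ ℕ) :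
    coeff (p ^ e • t) (c ^ p ^ e) = coeff t c ^ p ^ e := by
  have hinj : ∀ v : Fin n →₀ ℕ, p ^ e • v = p ^ e • t ↔ v = t := by
    intro v
    constructor
    · intro hv
      ext j
      have := congrArg (fun f : Fin n →₀ ℕ => f j) hv
      simp only [Finsupp.smul_apply, smul_eq_mul] at this
      exact Nat.eq_of_mul_eq_mul_left (qpos p e) this
    · rintro rfl; rfl
  rw [pow_eq_sum, coeff_sum]
  simp only [coeff_monomial, hinj]
  rw [Finset.sum_ite_eq' c.support t]
  by_cases h : t ∈ c.support
  · simp [h]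
  · rw [notMem_support_iff] at h
    simp [h, zero_pow (qpos p e).ne']

lemma coeff_pow_ne (c : MvPolynomial (Fin n) k) (s : Fin n →₀ ℕ)
    (hs : ∀ t, s ≠ p ^ e • t) : coeff s (c ^ p ^ e) = 0 := by
  rw [pow_eq_sum, coeff_sum]
  refine Finset.sum_eq_zero fun v _ => ?_
  rw [coeff_monomial, if_neg fun hv => hs v hv.symm]

lemma prod_X_pow (b : Fin n → Fin (p ^ e)) :
    (∏ j : Fin n, (X j : MvPolynomial (Fin n) k) ^ (b j : ℕ)) =
      monomial (Finsupp.equivFunOnFinite.symm fun j => (b j : ℕ)) 1 := by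
  set B : Fin n →₀ ℕ := Finsupp.equivFunOnFinite.symm fun j => (b j : ℕ) with hB
  rw [← prod_X_pow_eq_monomial, Finset.prod_subset (Finset.subset_univ B.support)
    (fun x _ hx => by rw [Finsupp.notMem_support_iff] at hx; simp [hx])]
  exact Finset.prod_congr rfl fun x _ => by simp [hB]

lemma coeff_term (b : Fin n → Fin (p ^ e)) (c : MvPolynomial (Fin n) k) (s : Fin n →₀ ℕ) :
    coeff s (c ^ p ^ e * ∏ j : Fin n, (X j : MvPolynomial (Fin n) k) ^ (b j : ℕ)) =
      if bOf p e s = b then coeff (tOf p e s) c ^ p ^ e else 0 := by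
  rw [_root_.prod_X_pow, coeff_mul_monomial']
  set B : Fin n →₀ ℕ := Finsupp.equivFunOnFinite.symm fun j => (b j : ℕ) with hB
  have hBapp : ∀ j, B j = (b j : ℕ) := fun j => by simp [hB]
  by_cases h1 : bOf p e s = b
  · have hle : B ≤ s := by
      intro j
      rw [hBapp j, ← h1]
      exact Nat.mod_le _ _
    rw [if_pos hle, if_pos h1]
    have hsub : s - B = p ^ e • tOf p e s := by
      ext j
      simp only [Finsupp.tsub_apply, Finsupp.smul_apply, smul_eq_mul, hBapp j, ← h1]
      simp only [bOf, tOf, Finsupp.mapRange_apply]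
      exact Nat.sub_eq_of_eq_add (Nat.div_add_mod (s j) (p ^ e)).symm
    rw [hsub, coeff_pow_smul, mul_one]
  · rw [if_neg h1]
    by_cases hle : B ≤ s
    · rw [if_pos hle]
      rw [coeff_pow_ne p e c _ ?_, zero_mul]
      intro t ht
      apply h1
      funext j
      apply Fin.ext
      have h2 : s j - B j = p ^ e * t j := by
        have := congrArg (fun f : Fin n →₀ ℕ => f j) ht
        simpa [Finsupp.tsub_apply] using this
      have h3 : s j = p ^ e * t j + (b j : ℕ) := by
        have h4 : (b j : ℕ) ≤ s j := le_trans (hBapp j).symm.le (hle j)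
        exact (Nat.sub_eq_iff_eq_add h4).mp h2
      simp [bOf, h3, Nat.mul_add_mod, Nat.mod_eq_of_lt (b j).isLt]
    · rw [if_neg hle]


lemma D_add (b : Fin n → Fin (p ^ e)) (f g : MvPolynomial (Fin n) k) :
    D p e b (f + g) = D p e b f + D p e b g := by
  apply MvPolynomial.ext
  intro t
  simp [coeff_D, coeff_add]

lemma D_zero (b : Fin n → Fin (p ^ e)) : D p e b (0 : MvPolynomial (Fin n) k) = 0 := by
  apply MvPolynomial.ext
  intro t
  simp [coeff_D]

lemma D_sum {α : Type*} (b : Fin n → Fin (p ^ e)) (s : Finset α)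
    (F : α → MvPolynomial (Fin n) k) :
    D p e b (∑ a ∈ s, F a) = ∑ a ∈ s, D p e b (F a) := by
  classical
  induction s using Finset.induction_on with
  | empty => simp [D_zero]
  | insert a s' hx ih => rw [Finset.sum_insert hx, Finset.sum_insert hx, D_add, ih]

lemma D_term (b b' : Fin n → Fin (p ^ e)) (c : MvPolynomial (Fin n) k) :
    D p e b' (c ^ p ^ e * ∏ j : Fin n, (X j : MvPolynomial (Fin n) k) ^ (b j : ℕ)) =
      if b = b' then c else 0 := by
  apply MvPolynomial.ext
  intro t
  rw [coeff_D, coeff_term, bOf_expMap, tOf_expMap]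
  by_cases hbb : b = b'
  · subst hbb
    simp [pow_rr]
  · rw [if_neg (fun hh => hbb hh.symm), if_neg hbb, map_zero, coeff_zero]

lemma D_decomp (f : MvPolynomial (Fin n) k) :
    ∑ b : Fin n → Fin (p ^ e), (D p e b f) ^ p ^ e *
      ∏ j : Fin n, (X j : MvPolynomial (Fin n) k) ^ (b j : ℕ) = f := by
  apply MvPolynomial.ext
  intro s
  rw [coeff_sum]
  simp only [coeff_term]
  rw [Finset.sum_ite_eq Finset.univ (bOf p e s)]
  rw [if_pos (Finset.mem_univ _), coeff_D, expMap_bOf_tOf, rr_pow]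

lemma D_mul (b : Fin n → Fin (p ^ e)) (f g : MvPolynomial (Fin n) k) :
    D p e b (f * g ^ p ^ e) = D p e b f * g := by
  conv_lhs => rw [← D_decomp p e f, Finset.sum_mul]
  have : ∀ b' : Fin n → Fin (p ^ e),
      (D p e b' f) ^ p ^ e * (∏ j : Fin n, (X j : MvPolynomial (Fin n) k) ^ (b' j : ℕ)) * g ^ p ^ e
      = (D p e b' f * g) ^ p ^ e * ∏ j : Fin n, (X j : MvPolynomial (Fin n) k) ^ (b' j : ℕ) := by
    intro b'
    rw [mul_pow]
    ring
  rw [Finset.sum_congr rfl fun b' _ => this b', D_sum]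
  simp only [D_term]
  rw [Finset.sum_ite_eq' Finset.univ b, if_pos (Finset.mem_univ _)]


lemma D_mem (J : Ideal (MvPolynomial (Fin n) k)) {f : MvPolynomial (Fin n) k}
    (hf : f ∈ frobeniusPower p e J) (b : Fin n → Fin (p ^ e)) : D p e b f ∈ J := by
  refine Submodule.span_induction (p := fun x _ => ∀ b, D p e b x ∈ J) ?_ ?_ ?_ ?_ hf b
  · rintro x ⟨g, hg, rfl⟩ b
    have h1 : D p e b ((1 : MvPolynomial (Fin n) k) * g ^ p ^ e) = D p e b 1 * g :=
      D_mul p e b 1 g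
    rw [one_mul] at h1
    rw [h1]
    exact Ideal.mul_mem_left J _ hg
  · intro b
    rw [D_zero]
    exact J.zero_mem
  · intro x y _ _ ihx ihy b
    rw [D_add]
    exact J.add_mem (ihx b) (ihy b)
  · intro r x _ ih b
    have hx2 : r • x = ∑ b' : Fin n → Fin (p ^ e),
        (r * ∏ j : Fin n, (X j : MvPolynomial (Fin n) k) ^ (b' j : ℕ)) *
          (D p e b' x) ^ p ^ e := by
      rw [smul_eq_mul]
      conv_lhs => rw [← D_decomp p e x]
      rw [Finset.mul_sum]
      exact Finset.sum_congr rfl fun b' _ => by ring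
    rw [hx2, D_sum]
    refine Ideal.sum_mem J fun b' _ => ?_
    rw [D_mul]
    exact Ideal.mul_mem_left J _ (ih b')

end


/-- Over a perfect field `k` of characteristic `p`, in `R = k[x₁,…,xₙ]`, write each
generator `hᵢ` of an ideal `b` as `hᵢ = Σ_w u_{i,w}^{pᵉ} · w`, where `w` ranges over the
monomials with exponents `< pᵉ` in each variable (an `R^{pᵉ}`-basis of `R`). Then
`b^{[1/pᵉ]}`, the smallest ideal `J` with `b ⊆ J^{[pᵉ]}`, equals the ideal generated by
the `u_{i,w}`; moreover if each `hᵢ` has degree `≤ d`, then each `u_{i,w}` has degree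
`≤ d/pᵉ`. -/
theorem frobenius_root_of_polynomial_ideal (k : Type*) [Field k] [PerfectField k]
    (p : ℕ) [Fact p.Prime] [CharP k p] (n : ℕ) (e : ℕ) (he : 1 ≤ e)
    (m : ℕ) (h : Fin m → MvPolynomial (Fin n) k)
    (u : Fin m → (Fin n → Fin (p ^ e)) → MvPolynomial (Fin n) k)
    (hdecomp : ∀ i, h i = ∑ b : Fin n → Fin (p ^ e),
      u i b ^ p ^ e * ∏ j : Fin n, (X j : MvPolynomial (Fin n) k) ^ (b j : ℕ)) :
    IsLeast {J : Ideal (MvPolynomial (Fin n) k) |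
        Ideal.span (Set.range h) ≤ frobeniusPower p e J}
      (Ideal.span (Set.range fun x : Fin m × (Fin n → Fin (p ^ e)) => u x.1 x.2)) ∧
      ∀ d : ℕ, (∀ i, (h i).totalDegree ≤ d) →
        ∀ i b, (u i b).totalDegree * p ^ e ≤ d := by
  have hu : ∀ i b, u i b = D p e b (h i) := by
    intro i b
    rw [hdecomp i, D_sum]
    simp only [D_term]
    rw [Finset.sum_ite_eq' Finset.univ b, if_pos (Finset.mem_univ _)]
  refine ⟨⟨?_, ?_⟩, ?_⟩
  · -- membership: span (range h) ≤ frobeniusPower p e J₀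
    rw [Set.mem_setOf_eq, Ideal.span_le]
    rintro _ ⟨i, rfl⟩
    rw [SetLike.mem_coe, hdecomp i]
    refine Ideal.sum_mem _ fun b _ => ?_
    have h1 : u i b ∈ Ideal.span (Set.range fun x : Fin m × (Fin n → Fin (p ^ e)) => u x.1 x.2) :=
      Ideal.subset_span ⟨(i, b), rfl⟩
    have h2 : u i b ^ p ^ e ∈ frobeniusPower p e
        (Ideal.span (Set.range fun x : Fin m × (Fin n → Fin (p ^ e)) => u x.1 x.2)) :=
      Ideal.subset_span ⟨u i b, h1, rfl⟩
    exact Ideal.mul_mem_right _ _ h2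
  · -- lower bound
    intro J hJ
    rw [Ideal.span_le]
    rintro _ ⟨⟨i, b⟩, rfl⟩
    show u i b ∈ J
    rw [hu i b]
    exact D_mem p e J (hJ (Ideal.subset_span ⟨i, rfl⟩)) b
  · -- degrees
    intro d hd i b
    by_cases h0 : u i b = 0
    · simp [h0]
    obtain ⟨t, ht, hts⟩ := Finset.exists_mem_eq_sup (u i b).support
      (support_nonempty.mpr h0) (fun s => s.sum fun _ n => n)
    have hdeg : (u i b).totalDegree = t.sum fun _ n => n := hts
    have hco : coeff (expMap p e b t) (h i) ≠ 0 := by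
      intro hz
      have : coeff t (u i b) = 0 := by rw [hu i b, coeff_D, hz, map_zero]
      exact (mem_support_iff.mp ht) this
    have h1 : ((expMap p e b t).sum fun _ n => n) ≤ d :=
      le_trans (le_totalDegree (mem_support_iff.mpr hco)) (hd i)
    have h2 : (t.sum fun _ n => n) * p ^ e ≤ (expMap p e b t).sum fun _ n => n := by
      rw [Finsupp.sum_fintype _ _ (fun _ => rfl), Finsupp.sum_fintype _ _ (fun _ => rfl)]
      calc (∑ j, t j) * p ^ e = ∑ j, t j * p ^ e := by rw [Finset.sum_mul]
        _ ≤ ∑ j, expMap p e b t j := by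
            refine Finset.sum_le_sum fun j _ => ?_
            rw [expMap_apply, mul_comm]
            exact Nat.le_add_right _ _
    rw [hdeg]
    exact le_trans h2 h1
end
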